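/- Let α be a type with decidable equality, let p ∈ ℕ, let X be a Finset in α with |X| ≥ p² + p + 1, and let Q : α → Finset α satisfy, for every x ∈ X, both |Q(x)| ≤ p and x ∈ Q(x). Then there exist y, z ∈ X with y ≠ z, y ∉ Q(z), and z ∉ Q(y). (Combinatorial core of the construction: among sufficiently many candidate words, each of whose associated accepting computations queries at most p words including the candidate itself, there exist two candidates neither of which is queried by the other's computation.) -/
import Mathlib


theorem stmt_12 {α : Type*} [DecidableEq α] (p : ℕ) (X : Finset α)
    (Q : α → Finset α)
    (hX : X.card ≥ p ^ 2 + p + 1)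
    (hQ : ∀ x ∈ X, (Q x).card ≤ p ∧ x ∈ Q x) :
    ∃ y ∈ X, ∃ z ∈ X, y ≠ z ∧ y ∉ Q z ∧ z ∉ Q y := by
  by_contra h
  push_neg at h
  -- p ≥ 1 since X is nonempty and x ∈ Q x
  obtain ⟨x, hx⟩ : X.Nonempty := Finset.card_pos.mp (by omega)
  have hp : 1 ≤ p := le_trans (Finset.card_pos.mpr ⟨x, (hQ x hx).2⟩) (hQ x hx).1
  -- every off-diagonal pair is covered
  have hcover : X.offDiag ⊆
      (X.offDiag.filter fun q => q.1 ∈ Q q.2) ∪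
      (X.offDiag.filter fun q => q.2 ∈ Q q.1) := by
    intro q hq
    obtain ⟨h1, h2, h3⟩ := Finset.mem_offDiag.mp hq
    rcases Decidable.em (q.1 ∈ Q q.2) with hc | hc
    · exact Finset.mem_union_left _ (Finset.mem_filter.mpr ⟨hq, hc⟩)
    · exact Finset.mem_union_right _ (Finset.mem_filter.mpr ⟨hq, h q.1 h1 q.2 h2 h3 hc⟩)
  -- bound each filter
  have key : ∀ (F : Finset (α × α)),
      (∀ q ∈ F, q.1 ∈ X ∧ q.2 ∈ X ∧ q.1 ≠ q.2 ∧ q.1 ∈ Q q.2) →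
      F.card ≤ X.card * (p - 1) := by
    intro F hF
    have hsub : F ⊆ X.biUnion (fun z => ((Q z).erase z).image (fun y => (y, z))) := by
      intro q hq
      obtain ⟨h1, h2, h3, h4⟩ := hF q hq
      refine Finset.mem_biUnion.mpr ⟨q.2, h2, ?_⟩
      exact Finset.mem_image.mpr ⟨q.1, Finset.mem_erase.mpr ⟨h3, h4⟩, rfl⟩
    calc F.card ≤ _ := Finset.card_le_card hsub
      _ ≤ ∑ z ∈ X, (((Q z).erase z).image (fun y => (y, z))).card :=
          Finset.card_biUnion_le
      _ ≤ ∑ z ∈ X, (p - 1) := by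
          refine Finset.sum_le_sum fun z hz => ?_
          refine le_trans Finset.card_image_le ?_
          rw [Finset.card_erase_of_mem (hQ z hz).2]
          exact Nat.sub_le_sub_right (hQ z hz).1 1
      _ = X.card * (p - 1) := by rw [Finset.sum_const, smul_eq_mul]
  have h1 : (X.offDiag.filter fun q => q.1 ∈ Q q.2).card ≤ X.card * (p - 1) := by
    refine key _ fun q hq => ?_
    obtain ⟨hq1, hq2⟩ := Finset.mem_filter.mp hq
    obtain ⟨a, b, c⟩ := Finset.mem_offDiag.mp hq1
    exact ⟨a, b, c, hq2⟩
  have h2 : (X.offDiag.filter fun q => q.2 ∈ Q q.1).card ≤ X.card * (p - 1) := by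
    have := key ((X.offDiag.filter fun q => q.2 ∈ Q q.1).image Prod.swap) ?_
    · refine le_trans ?_ this
      rw [Finset.card_image_of_injective _ Prod.swap_injective]
    · intro q hq
      obtain ⟨r, hr, hrq⟩ := Finset.mem_image.mp hq
      obtain ⟨hr1, hr2⟩ := Finset.mem_filter.mp hr
      obtain ⟨a, b, c⟩ := Finset.mem_offDiag.mp hr1
      subst hrq
      exact ⟨b, a, Ne.symm c, hr2⟩
  have hcard : X.card * X.card - X.card ≤ 2 * (X.card * (p - 1)) := by
    rw [← Finset.offDiag_card]
    calc X.offDiag.card ≤ _ := Finset.card_le_card hcover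
      _ ≤ _ + _ := Finset.card_union_le _ _
      _ ≤ 2 * (X.card * (p - 1)) := by omega
  obtain ⟨q, rfl⟩ : ∃ q, p = q + 1 := ⟨p - 1, by omega⟩
  simp only [Nat.add_sub_cancel] at hcard
  have h3 : X.card * X.card ≤ 2 * (X.card * q) + X.card :=
    Nat.sub_le_iff_le_add.mp hcard
  have hn : (q + 1) ^ 2 + (q + 1) + 1 ≤ X.card := hX
  nlinarith [mul_le_mul_of_nonneg_left hn (Nat.zero_le X.card)]
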